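/- Let π be a set partition of [n] into m parts and let a, b be reals with 0 < a < b < 2a. Then there exists a finite set E with [n] ⊆ E and |E| = n + m, together with m + 2 unit demand valuations u¹, …, u^{m+2} on subsets of E, such that the partition valuation v^{π,a,b} equals the endowment ∂^{E∖[n]}( u¹ * u² * ⋯ * u^{m+2} ) of their merge by E ∖ [n]. In particular, every partition valuation on [n] is the endowment of an OXS valuation (a merge of unit demand valuations) defined on n + m items. -/

import Mathlib

open Finset

variable {α : Type*} [DecidableEq α]

/-- A valuation on ground set `E`: zero at the empty set, non-negative,
and monotone on subsets of `E`. -/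
def IsValuation (E : Finset α) (u : Finset α → ℝ) : Prop :=
  u ∅ = 0 ∧ (∀ S : Finset α, S ⊆ E → 0 ≤ u S) ∧
    ∀ ⦃S T : Finset α⦄, S ⊆ T → T ⊆ E → u S ≤ u T

/-- Gross substitutes valuation on ground set `E`: a valuation satisfying the
M♮-exchange property. -/
def GrossSubstitutes (E : Finset α) (u : Finset α → ℝ) : Prop :=
  IsValuation E u ∧
    ∀ ⦃S T : Finset α⦄, S ⊆ E → T ⊆ E → ∀ i ∈ S \ T,
      u S + u T ≤ u (S.erase i) + u (insert i T) ∨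
        ∃ j ∈ T \ S,
          u S + u T ≤ u (insert j (S.erase i)) + u ((insert i T).erase j)

/-- The merge (convolution) of a valuation `u1` on `E1` and `u2` on `E2`:
`(u1 * u2)(S) = max { u1 S1 + u2 S2 : S = S1 ∪ S2, S1 ∩ S2 = ∅, S1 ⊆ E1, S2 ⊆ E2 }`. -/
noncomputable def mergeVal (E1 E2 : Finset α) (u1 u2 : Finset α → ℝ)
    (S : Finset α) : ℝ :=
  sSup {x : ℝ | ∃ S1 S2 : Finset α, S = S1 ∪ S2 ∧ Disjoint S1 S2 ∧
    S1 ⊆ E1 ∧ S2 ⊆ E2 ∧ x = u1 S1 + u2 S2}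

/-- The partition valuation `v^{π,a,b}`: value `0` at `∅`, value `a` on nonempty
sets contained in a single part of `π`, and value `b` otherwise. -/
noncomputable def partitionVal {E : Finset α} (π : Finpartition E) (a b : ℝ)
    (I : Finset α) : ℝ :=
  if I = ∅ then 0 else if ∃ p ∈ π.parts, I ⊆ p then a else b

/-- A unit demand valuation on ground set `E`: `u T = max_{i ∈ T} w i` for
nonempty `T ⊆ E`, and `u ∅ = 0`, for some nonnegative weights `w`. -/
def IsUnitDemand (E : Finset α) (u : Finset α → ℝ) : Prop :=
  ∃ w : α → ℝ, (∀ i, 0 ≤ w i) ∧ u ∅ = 0 ∧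
    ∀ T : Finset α, T ⊆ E → ∀ hT : T.Nonempty, u T = T.sup' hT w

/-- The iterated merge of a list of valuations (each paired with its ground
set), returning the resulting ground set and valuation. -/
noncomputable def mergeList :
    List (Finset α × (Finset α → ℝ)) → Finset α × (Finset α → ℝ)
  | [] => (∅, fun _ => 0)
  | p :: L =>
    let q := mergeList L
    (p.1 ∪ q.1, mergeVal p.1 q.1 p.2 q.2)

lemma mergeVal_eq_of {E1 E2 : Finset α} {u1 u2 : Finset α → ℝ} {S : Finset α} {c : ℝ}
    (hmem : ∃ S1 S2 : Finset α, S = S1 ∪ S2 ∧ Disjoint S1 S2 ∧ S1 ⊆ E1 ∧ S2 ⊆ E2 ∧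
      u1 S1 + u2 S2 = c)
    (hub : ∀ S1 S2 : Finset α, S = S1 ∪ S2 → Disjoint S1 S2 → S1 ⊆ E1 → S2 ⊆ E2 →
      u1 S1 + u2 S2 ≤ c) :
    mergeVal E1 E2 u1 u2 S = c := by
  apply IsGreatest.csSup_eq
  constructor
  · obtain ⟨S1, S2, h1, h2, h3, h4, h5⟩ := hmem
    exact ⟨S1, S2, h1, h2, h3, h4, h5.symm⟩
  · rintro x ⟨S1, S2, h1, h2, h3, h4, rfl⟩
    exact hub S1 S2 h1 h2 h3 h4

lemma mergeVal_le_of {E1 E2 : Finset α} {u1 u2 : Finset α → ℝ} {S : Finset α} {c : ℝ}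
    (hc : 0 ≤ c)
    (hub : ∀ S1 S2 : Finset α, S = S1 ∪ S2 → Disjoint S1 S2 → S1 ⊆ E1 → S2 ⊆ E2 →
      u1 S1 + u2 S2 ≤ c) :
    mergeVal E1 E2 u1 u2 S ≤ c := by
  apply Real.sSup_le _ hc
  rintro x ⟨S1, S2, h1, h2, h3, h4, rfl⟩
  exact hub S1 S2 h1 h2 h3 h4

lemma mem_mergeList_fst {L : List (Finset α × (Finset α → ℝ))} {x : α} :
    x ∈ (mergeList L).1 ↔ ∃ p ∈ L, x ∈ p.1 := by
  induction L with
  | nil => simp [mergeList]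
  | cons p L ih => simp [mergeList, ih]

lemma subset_mergeList_fst {L : List (Finset α × (Finset α → ℝ))} {p}
    (hp : p ∈ L) : p.1 ⊆ (mergeList L).1 := fun x hx =>
  mem_mergeList_fst.2 ⟨p, hp, hx⟩

lemma mergeList_snd_eq_sum {L : List (Finset α × (Finset α → ℝ))}
    (hd : L.Pairwise fun p q => Disjoint p.1 q.1)
    {T : Finset α} (hT : T ⊆ (mergeList L).1) :
    (mergeList L).2 T = (L.map (fun p => p.2 (T ∩ p.1))).sum := by
  induction L generalizing T with
  | nil => simp [mergeList]
  | cons p L ih =>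
    obtain ⟨hpL, hL⟩ := List.pairwise_cons.mp hd
    have hdisj : Disjoint p.1 (mergeList L).1 := by
      rw [Finset.disjoint_left]
      intro x hx hx2
      obtain ⟨q, hq, hxq⟩ := mem_mergeList_fst.mp hx2
      exact (Finset.disjoint_left.mp (hpL q hq)) hx hxq
    have hT' : T ⊆ p.1 ∪ (mergeList L).1 := hT
    have key : ∀ S1 S2 : Finset α, T = S1 ∪ S2 → Disjoint S1 S2 → S1 ⊆ p.1 →
        S2 ⊆ (mergeList L).1 → S1 = T ∩ p.1 ∧ S2 = T ∩ (mergeList L).1 := by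
      intro S1 S2 h1 h2 h3 h4
      constructor
      · apply Finset.Subset.antisymm
        · exact Finset.subset_inter (h1 ▸ Finset.subset_union_left) h3
        · intro x hx
          obtain ⟨hxT, hxp⟩ := Finset.mem_inter.mp hx
          rcases Finset.mem_union.mp (h1 ▸ hxT) with h | h
          · exact h
          · exact absurd (h4 h) (Finset.disjoint_left.mp hdisj hxp)
      · apply Finset.Subset.antisymm
        · exact Finset.subset_inter (h1 ▸ Finset.subset_union_right) h4
        · intro x hx
          obtain ⟨hxT, hxp⟩ := Finset.mem_inter.mp hx
          rcases Finset.mem_union.mp (h1 ▸ hxT) with h | h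
          · exact absurd (h3 h) (Finset.disjoint_right.mp hdisj hxp)
          · exact h
    have hval : (mergeList L).2 (T ∩ (mergeList L).1)
        = (L.map (fun q => q.2 (T ∩ q.1))).sum := by
      rw [ih hL Finset.inter_subset_right]
      congr 1
      apply List.map_congr_left
      intro q hq
      congr 1
      rw [Finset.inter_assoc, Finset.inter_eq_right.mpr (subset_mergeList_fst hq)]
    show mergeVal p.1 (mergeList L).1 p.2 (mergeList L).2 T = _
    apply mergeVal_eq_of
    · refine ⟨T ∩ p.1, T ∩ (mergeList L).1, ?_, ?_, Finset.inter_subset_right,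
        Finset.inter_subset_right, ?_⟩
      · rw [← Finset.inter_union_distrib_left]
        exact (Finset.inter_eq_left.mpr hT').symm
      · exact hdisj.mono Finset.inter_subset_right Finset.inter_subset_right
      · rw [hval, List.map_cons, List.sum_cons]
    · intro S1 S2 h1 h2 h3 h4
      obtain ⟨e1, e2⟩ := key S1 S2 h1 h2 h3 h4
      rw [e1, e2, hval, List.map_cons, List.sum_cons]

lemma list_range_map_sum (f : ℕ → ℝ) (m : ℕ) :
    ((List.range m).map f).sum = ∑ r ∈ Finset.range m, f r := by
  induction m with
  | zero => simp
  | succ k ih =>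
    rw [List.range_succ, List.map_append, List.sum_append, Finset.sum_range_succ, ih]
    simp

set_option maxHeartbeats 1600000 in
/-- Every partition valuation on `[n]` (with `m` parts) is the endowment, by
the `m` extra items, of a merge of `m + 2` unit demand valuations defined on
a ground set of `n + m` items. -/
theorem partitionVal_endowment_of_oxs (n : ℕ)
    (π : Finpartition (Finset.range n)) (a b : ℝ)
    (ha : 0 < a) (hab : a < b) (hb : b < 2 * a) :
    ∃ E : Finset ℕ, Finset.range n ⊆ E ∧ E.card = n + π.parts.card ∧
      ∃ L : List (Finset ℕ × (Finset ℕ → ℝ)),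
        L.length = π.parts.card + 2 ∧
        (∀ p ∈ L, p.1 ⊆ E ∧ IsUnitDemand p.1 p.2) ∧
        (mergeList L).1 = E ∧
        ∀ S : Finset ℕ, S ⊆ Finset.range n →
          partitionVal π a b S =
            (mergeList L).2 (S ∪ (E \ Finset.range n)) -
              (mergeList L).2 (E \ Finset.range n) := by

  classical
  set m := π.parts.card with hm
  set l : List (Finset ℕ) := π.parts.toList with hl
  have hlen : l.length = m := π.parts.length_toList
  have hnd : l.Nodup := π.parts.nodup_toList
  set part : ℕ → Finset ℕ := fun r => l.getD r ∅ with hpartdef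
  have hgetD : ∀ r (hr : r < l.length), part r = l[r] := fun r hr => List.getD_eq_getElem l ∅ hr
  have hpart_mem : ∀ r, r < m → part r ∈ π.parts := by
    intro r hr
    have hr' : r < l.length := by omega
    rw [hgetD r hr']
    exact Finset.mem_toList.mp (List.getElem_mem _)
  have hpart_inj : ∀ r s, r < m → s < m → part r = part s → r = s := by
    intro r s hr hs h
    have hr' : r < l.length := by omega
    have hs' : s < l.length := by omega
    rw [hgetD r hr', hgetD s hs'] at h
    exact (List.Nodup.getElem_inj_iff hnd).mp h
  have hpart_surj : ∀ p ∈ π.parts, ∃ r, r < m ∧ part r = p := by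
    intro p hp
    obtain ⟨r, hr, hrp⟩ := List.mem_iff_getElem.mp
      (show p ∈ l from Finset.mem_toList.mpr hp)
    exact ⟨r, by omega, by rw [hgetD r hr]; exact hrp⟩
  have hpart_sub : ∀ r, part r ⊆ Finset.range n := by
    intro r
    by_cases hr : r < l.length
    · rw [hgetD r hr]
      exact π.le (Finset.mem_toList.mp (List.getElem_mem _))
    · have h0 : part r = ∅ := by
        simp only [hpartdef]
        exact List.getD_eq_default _ _ (by omega)
      rw [h0]; exact Finset.empty_subset _
  have hcover : ∀ i, i < n → ∃ r, r < m ∧ i ∈ part r := by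
    intro i hi
    obtain ⟨p, hp, hip⟩ := π.exists_mem (Finset.mem_range.mpr hi)
    obtain ⟨r, hr, hrp⟩ := hpart_surj p hp
    exact ⟨r, hr, hrp ▸ hip⟩
  have hdisj_parts : ∀ r s, r < m → s < m → r ≠ s → Disjoint (part r) (part s) := by
    intro r s hr hs hne
    exact π.disjoint (hpart_mem r hr) (hpart_mem s hs)
      (fun h => hne (hpart_inj r s hr hs h))
  set E : Finset ℕ := Finset.range (n + m) with hE
  set W : Finset ℕ := E \ Finset.range n with hWdef
  have hmemW : ∀ x, x ∈ W ↔ n ≤ x ∧ x < n + m := by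
    intro x
    rw [hWdef, hE]
    simp only [Finset.mem_sdiff, Finset.mem_range]
    omega
  have hWsub : W ⊆ E := Finset.sdiff_subset
  have hrange_sub : Finset.range n ⊆ E := by
    intro x hx
    rw [Finset.mem_range] at hx
    rw [hE, Finset.mem_range]
    omega
  set Er : ℕ → Finset ℕ := fun r => insert (n + r) (part r) with hErdef
  have hmarkerW : ∀ r, r < m → n + r ∈ W := fun r hr => (hmemW _).mpr ⟨by omega, by omega⟩
  have hmarkerEr : ∀ r, n + r ∈ Er r := fun r => Finset.mem_insert_self _ _
  have hEr_sub : ∀ r, r < m → Er r ⊆ E := by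
    intro r hr x hx
    simp only [hErdef] at hx
    rcases Finset.mem_insert.mp hx with h | h
    · subst h; rw [hE, Finset.mem_range]; omega
    · exact hrange_sub (hpart_sub r h)
  set cval : ℝ → Finset ℕ → ℝ := fun c T => if T = ∅ then 0 else c with hcvaldef
  have hcval0 : ∀ c, cval c ∅ = 0 := by intro c; simp [hcvaldef]
  have hcval_ne : ∀ c (T : Finset ℕ), T.Nonempty → cval c T = c := by
    intro c T hT; simp [hcvaldef, hT.ne_empty]
  have hcval_le : ∀ c (T : Finset ℕ), 0 ≤ c → cval c T ≤ c := by
    intro c T hc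
    rcases Finset.eq_empty_or_nonempty T with rfl | hT
    · rw [hcval0]; exact hc
    · rw [hcval_ne c T hT]
  have hUD : ∀ c : ℝ, 0 ≤ c → ∀ G : Finset ℕ, IsUnitDemand G (cval c) := by
    intro c hc G
    refine ⟨fun _ => c, fun _ => hc, hcval0 c, fun T _ hT => ?_⟩
    rw [hcval_ne c T hT, Finset.sup'_const]
  set Lu := (List.range m).map (fun r => (Er r, cval a)) with hLu
  set L := (W, cval a) :: (W, cval (b - a)) :: Lu with hLdef
  have hEr_disj : ∀ r s, r ≠ s → Disjoint (Er r) (Er s) := by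
    intro r s hne
    rw [Finset.disjoint_left]
    intro x hx1 hx2
    simp only [hErdef] at hx1 hx2
    rcases Finset.mem_insert.mp hx1 with h1 | h1 <;>
      rcases Finset.mem_insert.mp hx2 with h2 | h2
    · omega
    · have := Finset.mem_range.mp (hpart_sub s h2); omega
    · have := Finset.mem_range.mp (hpart_sub r h1); omega
    · by_cases hr : r < m
      · by_cases hs : s < m
        · exact Finset.disjoint_left.mp (hdisj_parts r s hr hs hne) h1 h2
        · have h0 : part s = ∅ := by
            simp only [hpartdef]
            exact List.getD_eq_default _ _ (by omega)
          rw [h0] at h2; exact absurd h2 (Finset.notMem_empty x)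
      · have h0 : part r = ∅ := by
          simp only [hpartdef]
          exact List.getD_eq_default _ _ (by omega)
        rw [h0] at h1; exact absurd h1 (Finset.notMem_empty x)
  have hLu_pd : Lu.Pairwise (fun p q => Disjoint p.1 q.1) := by
    rw [hLu, List.pairwise_map]
    exact List.Pairwise.imp (fun h => hEr_disj _ _ (Nat.ne_of_lt h)) (List.pairwise_lt_range : List.Pairwise (· < ·) (List.range m))
  have hF : (mergeList Lu).1 = E := by
    ext x
    rw [mem_mergeList_fst]
    constructor
    · rintro ⟨p, hp, hxp⟩
      rw [hLu] at hp
      obtain ⟨r, hr, rfl⟩ := List.mem_map.mp hp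
      have hrm : r < m := List.mem_range.mp hr
      exact hEr_sub r hrm hxp
    · intro hx
      have hx' : x < n + m := by rw [hE, Finset.mem_range] at hx; exact hx
      by_cases hxn : x < n
      · obtain ⟨r, hr, hmem⟩ := hcover x hxn
        refine ⟨(Er r, cval a), List.mem_map.mpr ⟨r, List.mem_range.mpr hr, rfl⟩, ?_⟩
        simp only [hErdef]
        exact Finset.mem_insert_of_mem hmem
      · refine ⟨(Er (x - n), cval a),
          List.mem_map.mpr ⟨x - n, List.mem_range.mpr (by omega), rfl⟩, ?_⟩
        show x ∈ Er (x - n)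
        simp only [hErdef]
        have hxe : n + (x - n) = x := by omega
        rw [hxe]
        exact Finset.mem_insert_self _ _
  set cnt : Finset ℕ → ℕ :=
    fun T => ((Finset.range m).filter (fun r => (T ∩ Er r).Nonempty)).card with hcntdef
  have hcnt_le : ∀ T, cnt T ≤ m := by
    intro T
    simp only [hcntdef]
    exact le_trans (Finset.card_filter_le _ _) (by rw [Finset.card_range])
  have hcnt_cast : ∀ T, (cnt T : ℝ) ≤ (m : ℝ) := fun T => by exact_mod_cast hcnt_le T
  have hcnt_full : ∀ B : Finset ℕ, (∀ r, r < m → (B ∩ Er r).Nonempty) → cnt B = m := by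
    intro B hB
    simp only [hcntdef]
    rw [Finset.filter_true_of_mem (fun r hr => hB r (Finset.mem_range.mp hr))]
    exact Finset.card_range m
  have hUval : ∀ T ⊆ E, (mergeList Lu).2 T = a * cnt T := by
    intro T hT
    rw [mergeList_snd_eq_sum hLu_pd (hF ▸ hT : T ⊆ (mergeList Lu).1)]
    rw [hLu, List.map_map]
    have he : ((fun p : Finset ℕ × (Finset ℕ → ℝ) => p.2 (T ∩ p.1)) ∘
        fun r => (Er r, cval a)) = fun r => cval a (T ∩ Er r) := rfl
    rw [he, list_range_map_sum]
    have he2 : ∀ r ∈ Finset.range m,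
        cval a (T ∩ Er r) = if (T ∩ Er r).Nonempty then a else 0 := by
      intro r _
      rcases Finset.eq_empty_or_nonempty (T ∩ Er r) with h | h
      · rw [h, hcval0, if_neg (by simp)]
      · rw [hcval_ne _ _ h, if_pos h]
    rw [Finset.sum_congr rfl he2, ← Finset.sum_filter, Finset.sum_const, hcntdef]
    rw [nsmul_eq_mul, mul_comm]
  set idx : Finset ℕ → Finset ℕ :=
    fun A => (Finset.range m).filter (fun r => n + r ∈ A) with hidxdef
  have hidx_sub : ∀ A, idx A ⊆ Finset.range m := by
    intro A; simp only [hidxdef]; exact Finset.filter_subset _ _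
  have hidx_ne : ∀ A, A ⊆ W → A.Nonempty → 1 ≤ (idx A).card := by
    rintro A hA ⟨x, hx⟩
    have hxW := (hmemW x).mp (hA hx)
    have hmem : x - n ∈ idx A := by
      simp only [hidxdef]
      refine Finset.mem_filter.mpr ⟨Finset.mem_range.mpr (by omega), ?_⟩
      have hxe : n + (x - n) = x := by omega
      rw [hxe]; exact hx
    exact Finset.card_pos.mpr ⟨_, hmem⟩
  have hidx_disj : ∀ A A', Disjoint A A' → Disjoint (idx A) (idx A') := by
    intro A A' h
    rw [hidxdef, Finset.disjoint_left]
    intro r h1 h2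
    exact Finset.disjoint_left.mp h (Finset.mem_filter.mp h1).2 (Finset.mem_filter.mp h2).2
  have hC2 : ∀ S' A A' B' : Finset ℕ, A ⊆ W → A' ⊆ W → B' ⊆ S' ∪ W →
      Disjoint A B' → Disjoint A' B' → Disjoint A A' →
      cnt B' + (idx A).card + (idx A').card ≤
        m + ((Finset.range m).filter (fun r => (S' ∩ part r).Nonempty)).card := by
    intro S' A A' B' hA hA' hB' dAB dA'B dAA'
    have hsub : (Finset.range m).filter (fun r => (B' ∩ Er r).Nonempty) ⊆
        ((Finset.range m) \ (idx A ∪ idx A')) ∪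
          (Finset.range m).filter (fun r => (S' ∩ part r).Nonempty) := by
      intro r hr
      obtain ⟨hrm, hne⟩ := Finset.mem_filter.mp hr
      obtain ⟨x, hx⟩ := hne
      obtain ⟨hxB, hxE⟩ := Finset.mem_inter.mp hx
      simp only [hErdef] at hxE
      rcases Finset.mem_insert.mp hxE with h | h
      · apply Finset.mem_union_left
        refine Finset.mem_sdiff.mpr ⟨hrm, fun hmem => ?_⟩
        rcases Finset.mem_union.mp hmem with hm1 | hm1
        · simp only [hidxdef] at hm1
          exact Finset.disjoint_right.mp dAB hxB (h ▸ (Finset.mem_filter.mp hm1).2)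
        · simp only [hidxdef] at hm1
          exact Finset.disjoint_right.mp dA'B hxB (h ▸ (Finset.mem_filter.mp hm1).2)
      · apply Finset.mem_union_right
        refine Finset.mem_filter.mpr ⟨hrm, ?_⟩
        have hxS : x ∈ S' := by
          rcases Finset.mem_union.mp (hB' hxB) with h2 | h2
          · exact h2
          · exfalso
            have h3 := (hmemW x).mp h2
            have h4 := Finset.mem_range.mp (hpart_sub r h)
            omega
        exact ⟨x, Finset.mem_inter.mpr ⟨hxS, h⟩⟩
    have h1 := Finset.card_le_card hsub
    have h2 := Finset.card_union_le ((Finset.range m) \ (idx A ∪ idx A'))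
      ((Finset.range m).filter (fun r => (S' ∩ part r).Nonempty))
    have hsubu : idx A ∪ idx A' ⊆ Finset.range m :=
      Finset.union_subset (hidx_sub A) (hidx_sub A')
    have h3 : ((Finset.range m) \ (idx A ∪ idx A')).card = m - (idx A ∪ idx A').card := by
      rw [Finset.card_sdiff_of_subset hsubu, Finset.card_range]
    have h4 : (idx A ∪ idx A').card = (idx A).card + (idx A').card :=
      Finset.card_union_of_disjoint (hidx_disj _ _ dAA')
    have h5 : (idx A ∪ idx A').card ≤ m := by
      have := Finset.card_le_card hsubu
      rwa [Finset.card_range] at this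
    simp only [hcntdef]
    omega
  set M2 : Finset ℕ → ℝ := (mergeList ((W, cval (b - a)) :: Lu)).2 with hM2def
  have hba : (0:ℝ) ≤ b - a := by linarith
  have hM2eq : ∀ T, M2 T = mergeVal W E (cval (b - a)) (mergeList Lu).2 T := by
    intro T
    rw [hM2def]
    show mergeVal W (mergeList Lu).1 _ _ T = _
    rw [hF]
  have hMeq : ∀ T, (mergeList L).2 T = mergeVal W E (cval a) M2 T := by
    intro T
    rw [hLdef]
    show mergeVal W (mergeList ((W, cval (b - a)) :: Lu)).1 (cval a) M2 T = _
    have hg : (mergeList ((W, cval (b - a)) :: Lu)).1 = E := by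
      show W ∪ (mergeList Lu).1 = E
      rw [hF]
      exact Finset.union_eq_right.mpr hWsub
    rw [hg]
  have hM2_le : ∀ (B : Finset ℕ) (c : ℝ), 0 ≤ c →
      (∀ A' B' : Finset ℕ, B = A' ∪ B' → Disjoint A' B' → A' ⊆ W → B' ⊆ E →
        cval (b - a) A' + a * cnt B' ≤ c) → M2 B ≤ c := by
    intro B c hc h
    rw [hM2eq]
    apply mergeVal_le_of hc
    intro A' B' h1 h2 h3 h4
    rw [hUval B' h4]
    exact h A' B' h1 h2 h3 h4
  have hM2_eqc : ∀ (B : Finset ℕ) (c : ℝ),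
      (∃ A' B' : Finset ℕ, B = A' ∪ B' ∧ Disjoint A' B' ∧ A' ⊆ W ∧ B' ⊆ E ∧
        cval (b - a) A' + a * cnt B' = c) →
      (∀ A' B' : Finset ℕ, B = A' ∪ B' → Disjoint A' B' → A' ⊆ W → B' ⊆ E →
        cval (b - a) A' + a * cnt B' ≤ c) → M2 B = c := by
    rintro B c ⟨A', B', h1, h2, h3, h4, h5⟩ h
    rw [hM2eq]
    apply mergeVal_eq_of ⟨A', B', h1, h2, h3, h4, by rw [hUval B' h4]; exact h5⟩
    intro S1 S2 e1 e2 e3 e4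
    rw [hUval S2 e4]
    exact h S1 S2 e1 e2 e3 e4
  have hM2_generic : ∀ B : Finset ℕ, M2 B ≤ a * m + (b - a) := by
    intro B
    refine hM2_le B (a * m + (b - a))
      (by linarith [mul_nonneg ha.le (Nat.cast_nonneg m)]) ?_
    intro A' B' _ _ _ _
    have e1 := hcval_le (b - a) A' hba
    have e2 : a * (cnt B' : ℝ) ≤ a * m := by
      have := hcnt_cast B'
      nlinarith
    linarith
  -- value at W
  have hMW : (mergeList L).2 W = a * m := by
    rw [hMeq]
    apply mergeVal_eq_of
    · refine ⟨∅, W, by simp, Finset.disjoint_empty_left _, Finset.empty_subset _, hWsub, ?_⟩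
      rw [hcval0]
      have hv : M2 W = a * m := by
        apply hM2_eqc
        · refine ⟨∅, W, by simp, Finset.disjoint_empty_left _, Finset.empty_subset _, hWsub, ?_⟩
          rw [hcval0, hcnt_full W (fun r hr => ⟨n + r,
            Finset.mem_inter.mpr ⟨hmarkerW r hr, hmarkerEr r⟩⟩)]
          ring
        · intro A' B' h1 h2 h3 h4
          rcases Finset.eq_empty_or_nonempty A' with rfl | hA'ne
          · rw [hcval0]
            have e2 : a * (cnt B' : ℝ) ≤ a * m := by nlinarith [hcnt_cast B']
            linarith
          · rw [hcval_ne _ _ hA'ne]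
            have hB'W : B' ⊆ W := (h1 ▸ Finset.subset_union_right).trans (le_refl W)
            have hkey := hC2 ∅ ∅ A' B' (Finset.empty_subset _) h3
              (by rw [Finset.empty_union]; exact hB'W)
              (Finset.disjoint_empty_left _) h2 (Finset.disjoint_empty_left _)
            have ht0 : ((Finset.range m).filter
                (fun r => ((∅ : Finset ℕ) ∩ part r).Nonempty)).card = 0 := by
              simp
            have hi0 : (idx (∅ : Finset ℕ)).card = 0 := by
              simp only [hidxdef]; simp
            have hi1 := hidx_ne A' h3 hA'ne
            have hcnt1 : cnt B' + 1 ≤ m := by omega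
            have hcast : (cnt B' : ℝ) + 1 ≤ (m : ℝ) := by exact_mod_cast hcnt1
            nlinarith
      rw [hv, zero_add]
    · intro A B h1 h2 h3 h4
      have hBW : B ⊆ W := h1 ▸ Finset.subset_union_right
      rcases Finset.eq_empty_or_nonempty A with rfl | hAne
      · rw [hcval0]
        have hv : M2 B ≤ a * m := by
          refine hM2_le B (a * m) (mul_nonneg ha.le (Nat.cast_nonneg m)) ?_
          intro A' B' e1 e2 e3 e4
          have hB'W : B' ⊆ W := (e1 ▸ Finset.subset_union_right).trans hBW
          rcases Finset.eq_empty_or_nonempty A' with rfl | hA'ne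
          · rw [hcval0]
            nlinarith [hcnt_cast B']
          · rw [hcval_ne _ _ hA'ne]
            have hkey := hC2 ∅ ∅ A' B' (Finset.empty_subset _) e3
              (by rw [Finset.empty_union]; exact hB'W)
              (Finset.disjoint_empty_left _) e2 (Finset.disjoint_empty_left _)
            have ht0 : ((Finset.range m).filter
                (fun r => ((∅ : Finset ℕ) ∩ part r).Nonempty)).card = 0 := by simp
            have hi0 : (idx (∅ : Finset ℕ)).card = 0 := by simp only [hidxdef]; simp
            have hi1 := hidx_ne A' e3 hA'ne
            have hcast : (cnt B' : ℝ) + 1 ≤ (m : ℝ) := by exact_mod_cast (by omega :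
              cnt B' + 1 ≤ m)
            nlinarith
        linarith
      · rw [hcval_ne _ _ hAne]
        have hm1 : 1 ≤ m := by
          obtain ⟨x, hx⟩ := hAne
          have := (hmemW x).mp (h3 hx)
          omega
        have hm1' : (1:ℝ) ≤ (m:ℝ) := by exact_mod_cast hm1
        have hv : M2 B ≤ a * m - a := by
          refine hM2_le B (a * m - a)
            (by nlinarith [mul_nonneg ha.le (by linarith : (0:ℝ) ≤ (m:ℝ) - 1)]) ?_
          intro A' B' e1 e2 e3 e4
          have hB'B : B' ⊆ B := e1 ▸ Finset.subset_union_right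
          have hB'W : B' ⊆ W := hB'B.trans hBW
          have dAB' : Disjoint A B' := h2.mono_right hB'B
          have dAA' : Disjoint A A' := h2.mono_right (e1 ▸ Finset.subset_union_left)
          have hkey := hC2 ∅ A A' B' h3 e3 (by rw [Finset.empty_union]; exact hB'W)
            dAB' e2 dAA'
          have ht0 : ((Finset.range m).filter
              (fun r => ((∅ : Finset ℕ) ∩ part r).Nonempty)).card = 0 := by simp
          have hiA := hidx_ne A h3 hAne
          rcases Finset.eq_empty_or_nonempty A' with rfl | hA'ne
          · rw [hcval0]
            have hcast : (cnt B' : ℝ) + 1 ≤ (m : ℝ) := by exact_mod_cast (by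
              have hi0 : (idx (∅ : Finset ℕ)).card = 0 := by simp only [hidxdef]; simp
              omega : cnt B' + 1 ≤ m)
            nlinarith
          · rw [hcval_ne _ _ hA'ne]
            have hiA' := hidx_ne A' e3 hA'ne
            have hcast : (cnt B' : ℝ) + 2 ≤ (m : ℝ) := by exact_mod_cast (by omega :
              cnt B' + 2 ≤ m)
            nlinarith
        linarith
  -- final goal assembly
  refine ⟨E, hrange_sub, by rw [hE, Finset.card_range], L, ?_, ?_, ?_, ?_⟩
  · rw [hLdef, hLu]
    simp [List.length_map, List.length_range]
  · intro p hp
    rw [hLdef] at hp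
    rcases List.mem_cons.mp hp with rfl | hp
    · exact ⟨hWsub, hUD a ha.le W⟩
    rcases List.mem_cons.mp hp with rfl | hp
    · exact ⟨hWsub, hUD (b - a) hba W⟩
    · rw [hLu] at hp
      obtain ⟨r, hr, rfl⟩ := List.mem_map.mp hp
      exact ⟨hEr_sub r (List.mem_range.mp hr), hUD a ha.le (Er r)⟩
  · rw [hLdef]
    show W ∪ (mergeList ((W, cval (b - a)) :: Lu)).1 = E
    have hg : (mergeList ((W, cval (b - a)) :: Lu)).1 = E := by
      show W ∪ (mergeList Lu).1 = E
      rw [hF]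
      exact Finset.union_eq_right.mpr hWsub
    rw [hg]
    exact Finset.union_eq_right.mpr hWsub
  · intro S hS
    rw [← hWdef]
    rcases Finset.eq_empty_or_nonempty S with rfl | hSne
    · rw [partitionVal, if_pos rfl, Finset.empty_union, sub_self]
    have hSW : S ∪ W ⊆ E := Finset.union_subset (hS.trans hrange_sub) hWsub
    have hSnm : ∀ x ∈ S, x < n := fun x hx => Finset.mem_range.mp (hS hx)
    rw [partitionVal, if_neg hSne.ne_empty]
    by_cases hone : ∃ p ∈ π.parts, S ⊆ p
    · rw [if_pos hone]
      obtain ⟨p, hp, hSp⟩ := hone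
      obtain ⟨r₀, hr₀, hpr₀⟩ := hpart_surj p hp
      have hSp' : S ⊆ part r₀ := hpr₀ ▸ hSp
      have htS1 : ((Finset.range m).filter (fun r => (S ∩ part r).Nonempty)).card ≤ 1 := by
        apply Finset.card_le_one.mpr
        intro r hr s hs
        obtain ⟨hrm, x, hx⟩ := Finset.mem_filter.mp hr
        obtain ⟨hsm, y, hy⟩ := Finset.mem_filter.mp hs
        obtain ⟨hxS, hxp⟩ := Finset.mem_inter.mp hx
        obtain ⟨hyS, hyp⟩ := Finset.mem_inter.mp hy
        rw [Finset.mem_range] at hrm hsm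
        have e1 : part r = part r₀ :=
          π.eq_of_mem_parts (hpart_mem r hrm) (hpart_mem r₀ hr₀) hxp (hSp' hxS)
        have e2 : part s = part r₀ :=
          π.eq_of_mem_parts (hpart_mem s hsm) (hpart_mem r₀ hr₀) hyp (hSp' hyS)
        rw [hpart_inj r r₀ hrm hr₀ e1, hpart_inj s r₀ hsm hr₀ e2]
      have hMSW : (mergeList L).2 (S ∪ W) = a * m + a := by
        rw [hMeq]
        apply mergeVal_eq_of
        · have hr₀W : n + r₀ ∈ S ∪ W := Finset.mem_union_right _ (hmarkerW r₀ hr₀)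
          refine ⟨{n + r₀}, (S ∪ W) \ {n + r₀}, ?_, Finset.disjoint_sdiff,
            Finset.singleton_subset_iff.mpr (hmarkerW r₀ hr₀), Finset.sdiff_subset.trans hSW, ?_⟩
          · rw [Finset.union_sdiff_of_subset (Finset.singleton_subset_iff.mpr hr₀W)]
          · rw [hcval_ne _ _ (Finset.singleton_nonempty _)]
            have hv : M2 ((S ∪ W) \ {n + r₀}) = a * m := by
              apply hM2_eqc
              · refine ⟨∅, (S ∪ W) \ {n + r₀}, by simp, Finset.disjoint_empty_left _,
                  Finset.empty_subset _, Finset.sdiff_subset.trans hSW, ?_⟩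
                rw [hcval0, hcnt_full _ ?_]
                · ring
                · intro r hr
                  by_cases hrr : r = r₀
                  · subst hrr
                    obtain ⟨x, hx⟩ := hSne
                    refine ⟨x, Finset.mem_inter.mpr ⟨?_, ?_⟩⟩
                    · refine Finset.mem_sdiff.mpr ⟨Finset.mem_union_left _ hx, ?_⟩
                      have := hSnm x hx
                      simp only [Finset.mem_singleton]
                      omega
                    · simp only [hErdef]
                      exact Finset.mem_insert_of_mem (hSp' hx)
                  · refine ⟨n + r, Finset.mem_inter.mpr ⟨?_, hmarkerEr r⟩⟩
                    refine Finset.mem_sdiff.mpr ⟨Finset.mem_union_right _ (hmarkerW r hr), ?_⟩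
                    simp only [Finset.mem_singleton]
                    omega
              · intro A' B' e1 e2 e3 e4
                have hB'sub : B' ⊆ (S ∪ W) \ {n + r₀} := e1 ▸ Finset.subset_union_right
                have hB'SW : B' ⊆ S ∪ W := hB'sub.trans Finset.sdiff_subset
                rcases Finset.eq_empty_or_nonempty A' with rfl | hA'ne
                · rw [hcval0]
                  nlinarith [hcnt_cast B']
                · rw [hcval_ne _ _ hA'ne]
                  have dAB' : Disjoint ({n + r₀} : Finset ℕ) B' := by
                    rw [Finset.disjoint_left]
                    intro x hx hx2
                    rw [Finset.mem_singleton] at hx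
                    exact (Finset.mem_sdiff.mp (hB'sub hx2)).2 (by rw [hx] at *; simp)
                  have dAA' : Disjoint ({n + r₀} : Finset ℕ) A' := by
                    rw [Finset.disjoint_left]
                    intro x hx hx2
                    have hx3 : x ∈ (S ∪ W) \ {n + r₀} := e1 ▸ Finset.mem_union_left _ hx2
                    rw [Finset.mem_singleton] at hx
                    exact (Finset.mem_sdiff.mp hx3).2 (by rw [hx] at *; simp)
                  have hkey := hC2 S {n + r₀} A' B'
                    (Finset.singleton_subset_iff.mpr (hmarkerW r₀ hr₀)) e3 hB'SW
                    dAB' e2 dAA'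
                  have hiA := hidx_ne {n + r₀}
                    (Finset.singleton_subset_iff.mpr (hmarkerW r₀ hr₀))
                    (Finset.singleton_nonempty _)
                  have hiA' := hidx_ne A' e3 hA'ne
                  have hcast : (cnt B' : ℝ) + 1 ≤ (m : ℝ) := by
                    exact_mod_cast (by omega : cnt B' + 1 ≤ m)
                  nlinarith
            rw [hv]
            ring
        · intro A B h1 h2 h3 h4
          rcases Finset.eq_empty_or_nonempty A with rfl | hAne
          · rw [hcval0]
            have hv : M2 B ≤ a * m + a := by
              refine le_trans (hM2_generic B) ?_
              linarith
            linarith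
          · rw [hcval_ne _ _ hAne]
            have hBsub : B ⊆ S ∪ W := h1 ▸ Finset.subset_union_right
            have hv : M2 B ≤ a * m := by
              refine hM2_le B (a * m) (mul_nonneg ha.le (Nat.cast_nonneg m)) ?_
              intro A' B' e1 e2 e3 e4
              have hB'B : B' ⊆ B := e1 ▸ Finset.subset_union_right
              rcases Finset.eq_empty_or_nonempty A' with rfl | hA'ne
              · rw [hcval0]
                nlinarith [hcnt_cast B']
              · rw [hcval_ne _ _ hA'ne]
                have dAB' : Disjoint A B' := h2.mono_right hB'B
                have dAA' : Disjoint A A' := h2.mono_right (e1 ▸ Finset.subset_union_left)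
                have hkey := hC2 S A A' B' h3 e3 (hB'B.trans hBsub) dAB' e2 dAA'
                have hiA := hidx_ne A h3 hAne
                have hiA' := hidx_ne A' e3 hA'ne
                have hcast : (cnt B' : ℝ) + 1 ≤ (m : ℝ) := by
                  exact_mod_cast (by omega : cnt B' + 1 ≤ m)
                nlinarith
            linarith
      rw [hMSW, hMW]
      ring
    · rw [if_neg hone]
      -- find two touched parts
      obtain ⟨x, hx⟩ := hSne
      obtain ⟨r₁, hr₁, hxr₁⟩ := hcover x (hSnm x hx)
      have hnsub : ¬ S ⊆ part r₁ := fun hsub => hone ⟨part r₁, hpart_mem r₁ hr₁, hsub⟩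
      obtain ⟨y, hyS, hyn⟩ := Finset.not_subset.mp hnsub
      obtain ⟨r₂, hr₂, hyr₂⟩ := hcover y (hSnm y hyS)
      have hrne : r₁ ≠ r₂ := fun h => hyn (h ▸ hyr₂)
      have hMSW : (mergeList L).2 (S ∪ W) = a * m + b := by
        rw [hMeq]
        apply mergeVal_eq_of
        · have hr₁W : n + r₁ ∈ S ∪ W := Finset.mem_union_right _ (hmarkerW r₁ hr₁)
          refine ⟨{n + r₁}, (S ∪ W) \ {n + r₁}, ?_, Finset.disjoint_sdiff,
            Finset.singleton_subset_iff.mpr (hmarkerW r₁ hr₁), Finset.sdiff_subset.trans hSW, ?_⟩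
          · rw [Finset.union_sdiff_of_subset (Finset.singleton_subset_iff.mpr hr₁W)]
          · rw [hcval_ne _ _ (Finset.singleton_nonempty _)]
            have hr₂B : n + r₂ ∈ (S ∪ W) \ {n + r₁} := by
              refine Finset.mem_sdiff.mpr ⟨Finset.mem_union_right _ (hmarkerW r₂ hr₂), ?_⟩
              simp only [Finset.mem_singleton]
              omega
            have hv : M2 ((S ∪ W) \ {n + r₁}) = a * m + (b - a) := by
              apply hM2_eqc
              · refine ⟨{n + r₂}, ((S ∪ W) \ {n + r₁}) \ {n + r₂}, ?_, Finset.disjoint_sdiff,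
                  Finset.singleton_subset_iff.mpr (hmarkerW r₂ hr₂),
                  (Finset.sdiff_subset.trans Finset.sdiff_subset).trans hSW, ?_⟩
                · rw [Finset.union_sdiff_of_subset (Finset.singleton_subset_iff.mpr hr₂B)]
                · rw [hcval_ne _ _ (Finset.singleton_nonempty _), hcnt_full _ ?_]
                  · ring
                  · intro r hr
                    by_cases hc1 : r = r₁
                    · subst hc1
                      refine ⟨x, Finset.mem_inter.mpr ⟨?_, ?_⟩⟩
                      · have hxn := hSnm x hx
                        refine Finset.mem_sdiff.mpr ⟨Finset.mem_sdiff.mpr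
                          ⟨Finset.mem_union_left _ hx, ?_⟩, ?_⟩ <;>
                          · simp only [Finset.mem_singleton]; omega
                      · simp only [hErdef]; exact Finset.mem_insert_of_mem hxr₁
                    by_cases hc2 : r = r₂
                    · subst hc2
                      refine ⟨y, Finset.mem_inter.mpr ⟨?_, ?_⟩⟩
                      · have hyn' := hSnm y hyS
                        refine Finset.mem_sdiff.mpr ⟨Finset.mem_sdiff.mpr
                          ⟨Finset.mem_union_left _ hyS, ?_⟩, ?_⟩ <;>
                          · simp only [Finset.mem_singleton]; omega
                      · simp only [hErdef]; exact Finset.mem_insert_of_mem hyr₂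
                    · refine ⟨n + r, Finset.mem_inter.mpr ⟨?_, hmarkerEr r⟩⟩
                      refine Finset.mem_sdiff.mpr ⟨Finset.mem_sdiff.mpr
                        ⟨Finset.mem_union_right _ (hmarkerW r hr), ?_⟩, ?_⟩ <;>
                        · simp only [Finset.mem_singleton]; omega
              · intro A' B' e1 e2 e3 e4
                rcases Finset.eq_empty_or_nonempty A' with rfl | hA'ne
                · rw [hcval0]
                  nlinarith [hcnt_cast B']
                · rw [hcval_ne _ _ hA'ne]
                  nlinarith [hcnt_cast B']
            rw [hv]
            ring
        · intro A B h1 h2 h3 h4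
          have e1 := hcval_le a A ha.le
          have e2 := hM2_generic B
          linarith
      rw [hMSW, hMW]
      ring
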